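/- Let G be a graph and let A,B ⊆ Ω_E(G) be sets of edge-ends with Ā ∩ B = A ∩ B̄ = ∅ (closures in Ω_E(G)). Let κ be the supremum of the cardinalities of families of pairwise edge-disjoint A–B paths. If κ is infinite, then every ⊆-maximal family of pairwise edge-disjoint A–B paths has cardinality κ; in particular, the supremum is attained. -/

import Mathlib

/-!
Formalization of definitions and a statement from
"Edge-connectivity and edge-ends in infinite graphs" (arXiv:2404.17106).
-/

universe u

namespace EdgeEndPaper

variable {V : Type u}

/-- A ray in `G`: a one-way infinite path `v₀v₁v₂…`. -/
structure Ray (G : SimpleGraph V) : Type u where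
  f : ℕ → V
  inj : Function.Injective f
  adj : ∀ n : ℕ, G.Adj (f n) (f (n + 1))

/-- A double ray in `G`: a two-way infinite path. -/
structure DoubleRay (G : SimpleGraph V) : Type u where
  f : ℤ → V
  inj : Function.Injective f
  adj : ∀ n : ℤ, G.Adj (f n) (f (n + 1))

variable (G : SimpleGraph V)

/-- The tails of the rays `r` and `s` lie in the same connected component of `G - F`
(deletion of the edges in `F`). -/
def SameComp (F : Set (Sym2 V)) (r s : Ray G) : Prop :=
  ∃ N : ℕ, ∀ m n : ℕ, N ≤ m → N ≤ n → (G.deleteEdges F).Reachable (r.f m) (s.f n)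

/-- Edge-equivalence of rays: no finite edge set separates the tails of `r` and `s`. -/
def EdgeEquiv (r s : Ray G) : Prop :=
  ∀ F : Set (Sym2 V), F.Finite → SameComp G F r s

/-- The edge-end space `Ω_E(G)`. -/
def EdgeEnd : Type u := Quot (EdgeEquiv G)

/-- The edge-end `[r]_E` of a ray `r`. -/
def Ray.edgeEnd {G : SimpleGraph V} (r : Ray G) : EdgeEnd G := Quot.mk _ r

/-- `C_E(F, ω)` : the vertices of the connected component of `G - F` in which `ω` has a tail. -/
def CE (F : Set (Sym2 V)) (ω : EdgeEnd G) : Set V :=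
  {v | ∃ r : Ray G, r.edgeEnd = ω ∧ ∃ N : ℕ, ∀ n : ℕ, N ≤ n →
    (G.deleteEdges F).Reachable (r.f n) v}

/-- `Ω_E(F, ω)` : the edge-ends whose rays have tails in the same component of `G - F`
as the rays of `ω`. -/
def OmegaE (F : Set (Sym2 V)) (ω : EdgeEnd G) : Set (EdgeEnd G) :=
  {η | ∃ r s : Ray G, r.edgeEnd = ω ∧ s.edgeEnd = η ∧ SameComp G F r s}

/-- The topology on `Ω_E(G)`, with the sets `Ω_E(F, ω)` (for finite `F ⊆ E(G)`) as a basis. -/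
def edgeEndTopology : TopologicalSpace (EdgeEnd G) :=
  .generateFrom {U | ∃ (F : Set (Sym2 V)) (ω : EdgeEnd G),
    F.Finite ∧ F ⊆ G.edgeSet ∧ U = OmegaE G F ω}

/-- `Ê(F, ω) = C_E(F, ω) ∪ Ω_E(F, ω)`, inside `Ê(G) = V(G) ⊔ Ω_E(G)`. -/
def EHatBasic (F : Set (Sym2 V)) (ω : EdgeEnd G) : Set (V ⊕ EdgeEnd G) :=
  Sum.inl '' CE G F ω ∪ Sum.inr '' OmegaE G F ω

/-- The topology on `Ê(G) = V(G) ∪ Ω_E(G)`: the vertex singletons together with the sets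
`Ê(F, ω)` (for finite `F ⊆ E(G)`) form a basis. -/
def eHatTopology : TopologicalSpace (V ⊕ EdgeEnd G) :=
  .generateFrom ({U | ∃ v : V, U = {Sum.inl v}} ∪
    {U | ∃ (F : Set (Sym2 V)) (ω : EdgeEnd G),
      F.Finite ∧ F ⊆ G.edgeSet ∧ U = EHatBasic G F ω})

/-- A vertex `v` edge-dominates the edge-end `ω` if `v ∈ C_E(F, ω)` for every finite `F`. -/
def EdgeDominates (v : V) (ω : EdgeEnd G) : Prop :=
  ∀ F : Set (Sym2 V), F.Finite → v ∈ CE G F ω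

/-- The cut `δ(X)`: the edges of `G` with one endpoint in `X` and the other outside of `X`. -/
def cut (X : Set V) : Set (Sym2 V) :=
  {e | e ∈ G.edgeSet ∧ ∃ u v : V, e = s(u, v) ∧ u ∈ X ∧ v ∉ X}

/-- The positive half-ray of a double ray. -/
def DoubleRay.posRay {G : SimpleGraph V} (d : DoubleRay G) : Ray G where
  f n := d.f n
  inj a b h := by exact_mod_cast d.inj h
  adj n := by
    have h := d.adj (n : ℤ)
    rwa [show ((n : ℤ) + 1) = ((n + 1 : ℕ) : ℤ) by push_cast; ring] at h

/-- The negative half-ray of a double ray. -/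
def DoubleRay.negRay {G : SimpleGraph V} (d : DoubleRay G) : Ray G where
  f n := d.f (-n)
  inj a b h := by
    have h2 : -(a : ℤ) = -(b : ℤ) := d.inj h
    exact_mod_cast neg_injective h2
  adj n := by
    have h := (d.adj (-((n : ℤ) + 1))).symm
    rw [show (-((n : ℤ) + 1) + 1) = -(n : ℤ) by ring] at h
    rwa [show (-((n : ℤ) + 1)) = -((n + 1 : ℕ) : ℤ) by push_cast; ring] at h

/-- A generalized path in `G`: a finite path, a ray, or a double ray. -/
inductive GenPath (G : SimpleGraph V) : Type u where
  | finite : (u v : V) → (p : G.Walk u v) → p.IsPath → GenPath G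
  | ray : Ray G → GenPath G
  | doubleRay : DoubleRay G → GenPath G

/-- The edge set of a generalized path. -/
def GenPath.edges {G : SimpleGraph V} : GenPath G → Set (Sym2 V)
  | .finite _ _ p _ => {e | e ∈ p.edges}
  | .ray r => Set.range fun n : ℕ => s(r.f n, r.f (n + 1))
  | .doubleRay d => Set.range fun n : ℤ => s(d.f n, d.f (n + 1))

/-- The vertex set of a generalized path. -/
def GenPath.vertices {G : SimpleGraph V} : GenPath G → Set V
  | .finite _ _ p _ => {v | v ∈ p.support}
  | .ray r => Set.range r.f
  | .doubleRay d => Set.range d.f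

/-- A family of pairwise edge-disjoint generalized paths. -/
def PairwiseEdgeDisjoint (Ps : Set (GenPath G)) : Prop :=
  Ps.Pairwise fun P Q => P.edges ∩ Q.edges = ∅

/-- A graphic `v–ω` path: a ray starting at `v` whose edge-end is `ω`. -/
def IsGraphicVertexEndPath (v : V) (ω : EdgeEnd G) (P : GenPath G) : Prop :=
  ∃ r : Ray G, P = .ray r ∧ r.f 0 = v ∧ r.edgeEnd = ω

/-- A `v–ω` path: a graphic `v–ω` path, or a finite path from `v` to a vertex
edge-dominating `ω`. -/
def IsVertexEndPath (v : V) (ω : EdgeEnd G) (P : GenPath G) : Prop :=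
  IsGraphicVertexEndPath G v ω P ∨
    ∃ u : V, EdgeDominates G u ω ∧
      ∃ (p : G.Walk v u) (hp : p.IsPath), P = .finite v u p hp

/-- A graphic `ω₁–ω₂` path: a double ray one of whose half-rays has edge-end `ω₁` and
the other edge-end `ω₂`. -/
def IsGraphicEndEndPath (ω₁ ω₂ : EdgeEnd G) (P : GenPath G) : Prop :=
  ∃ d : DoubleRay G, P = .doubleRay d ∧
    ((d.posRay.edgeEnd = ω₁ ∧ d.negRay.edgeEnd = ω₂) ∨
     (d.posRay.edgeEnd = ω₂ ∧ d.negRay.edgeEnd = ω₁))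

/-- An `ω₁–ω₂` path: a graphic `ω₁–ω₂` path, or a `v–ωᵢ` path for some vertex `v`
edge-dominating the other edge-end. -/
def IsEndEndPath (ω₁ ω₂ : EdgeEnd G) (P : GenPath G) : Prop :=
  IsGraphicEndEndPath G ω₁ ω₂ P ∨
    (∃ v : V, EdgeDominates G v ω₂ ∧ IsVertexEndPath G v ω₁ P) ∨
    (∃ v : V, EdgeDominates G v ω₁ ∧ IsVertexEndPath G v ω₂ P)

/-- `P` is a `t₁–t₂` path, for points `t₁, t₂ ∈ Ê(G) = V(G) ⊔ Ω_E(G)`. -/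
def Connects : V ⊕ EdgeEnd G → V ⊕ EdgeEnd G → GenPath G → Prop := fun a b P =>
  match a, b with
  | Sum.inl u, Sum.inl v => ∃ (p : G.Walk u v) (hp : p.IsPath), P = .finite u v p hp
  | Sum.inl v, Sum.inr ω => IsVertexEndPath G v ω P
  | Sum.inr ω, Sum.inl v => IsVertexEndPath G v ω P
  | Sum.inr ω₁, Sum.inr ω₂ => IsEndEndPath G ω₁ ω₂ P

/-- An `A–B` path for sets of edge-ends `A` and `B`. -/
def IsABPathEE (A B : Set (EdgeEnd G)) (P : GenPath G) : Prop :=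
  ∃ ω₁ ∈ A, ∃ ω₂ ∈ B, IsEndEndPath G ω₁ ω₂ P

section AuxProof

variable {G : SimpleGraph V}

lemma ray_edge_injective (r : Ray G) :
    Function.Injective fun n : ℕ => s(r.f n, r.f (n + 1)) := by
  intro m n h
  simp only [Sym2.eq_iff] at h
  rcases h with ⟨h1, -⟩ | ⟨h1, h2⟩
  · exact r.inj h1
  · have e1 := r.inj h1
    have e2 := r.inj h2
    omega

lemma ray_tail_avoid (r : Ray G) {F : Set (Sym2 V)} (hF : F.Finite) :
    ∃ N : ℕ, ∀ n, N ≤ n → s(r.f n, r.f (n + 1)) ∉ F := by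
  have hfin : {n : ℕ | s(r.f n, r.f (n + 1)) ∈ F}.Finite :=
    hF.preimage (ray_edge_injective r).injOn
  obtain ⟨N, hN⟩ := hfin.bddAbove
  exact ⟨N + 1, fun n hn hmem => by have := hN hmem; omega⟩

lemma ray_reach (r : Ray G) {F : Set (Sym2 V)} {N : ℕ}
    (h : ∀ n, N ≤ n → s(r.f n, r.f (n + 1)) ∉ F) :
    ∀ m n, N ≤ m → N ≤ n → (G.deleteEdges F).Reachable (r.f m) (r.f n) := by
  have aux : ∀ (k m : ℕ), N ≤ m → (G.deleteEdges F).Reachable (r.f m) (r.f (m + k)) := by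
    intro k
    induction k with
    | zero => exact fun m _ => SimpleGraph.Reachable.refl _
    | succ k ih =>
      intro m hm
      refine (ih m hm).trans (SimpleGraph.Adj.reachable ?_)
      rw [SimpleGraph.deleteEdges_adj]
      exact ⟨r.adj _, h _ (by omega)⟩
  intro m n hm hn
  rcases le_total m n with hmn | hmn
  · have := aux (n - m) m hm; rwa [Nat.add_sub_cancel' hmn] at this
  · have := aux (m - n) n hn
    rw [Nat.add_sub_cancel' hmn] at this
    exact this.symm

lemma dr_reach (d : DoubleRay G) {F : Set (Sym2 V)}
    (h : ∀ k : ℤ, s(d.f k, d.f (k + 1)) ∉ F) (m n : ℤ) :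
    (G.deleteEdges F).Reachable (d.f m) (d.f n) := by
  have aux : ∀ (k : ℕ) (m : ℤ), (G.deleteEdges F).Reachable (d.f m) (d.f (m + k)) := by
    intro k
    induction k with
    | zero => intro m; simpa using SimpleGraph.Reachable.refl (d.f m)
    | succ k ih =>
      intro m
      refine (ih m).trans ?_
      have hadj : (G.deleteEdges F).Adj (d.f (m + k)) (d.f (m + k + 1)) := by
        rw [SimpleGraph.deleteEdges_adj]
        exact ⟨d.adj _, h _⟩
      have : (m : ℤ) + ((k : ℕ) + 1 : ℕ) = m + k + 1 := by push_cast; ring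
      rw [this]
      exact hadj.reachable
  rcases le_total m n with hmn | hmn
  · have := aux (n - m).toNat m
    rwa [show (m + ((n - m).toNat : ℤ)) = n by omega] at this
  · have := aux (m - n).toNat n
    rw [show (n + ((m - n).toNat : ℤ)) = m by omega] at this
    exact this.symm

lemma walk_reach {u v : V} (p : G.Walk u v) {F : Set (Sym2 V)}
    (h : ∀ e ∈ p.edges, e ∉ F) {x : V} (hx : x ∈ p.support) :
    (G.deleteEdges F).Reachable u x := by
  classical
  exact ((p.takeUntil x hx).toDeleteEdges F
    (fun e he => h e (SimpleGraph.Walk.edges_takeUntil_subset p hx he))).reachable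

lemma genpath_conn (Q : GenPath G) {F : Set (Sym2 V)} (h : ∀ e ∈ Q.edges, e ∉ F) :
    ∀ x ∈ Q.vertices, ∀ y ∈ Q.vertices, (G.deleteEdges F).Reachable x y := by
  cases Q with
  | finite u v p hp =>
    intro x hx y hy
    exact (walk_reach p h hx).symm.trans (walk_reach p h hy)
  | ray r =>
    rintro x ⟨m, rfl⟩ y ⟨n, rfl⟩
    exact ray_reach r (N := 0) (fun n _ => h _ ⟨n, rfl⟩) m n (Nat.zero_le _) (Nat.zero_le _)
  | doubleRay d =>
    rintro x ⟨m, rfl⟩ y ⟨n, rfl⟩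
    exact dr_reach d (fun k => h _ ⟨k, rfl⟩) m n

lemma mem_vertices_of_edge {Q : GenPath G} {a b : V} (h : s(a, b) ∈ Q.edges) :
    a ∈ Q.vertices := by
  cases Q with
  | finite u v p hp => exact SimpleGraph.Walk.fst_mem_support_of_mem_edges p h
  | ray r =>
    obtain ⟨n, hn⟩ := h
    rw [Sym2.eq_iff] at hn
    rcases hn with ⟨h1, -⟩ | ⟨-, h2⟩
    · exact ⟨n, h1⟩
    · exact ⟨n + 1, h2⟩
  | doubleRay d =>
    obtain ⟨n, hn⟩ := h
    rw [Sym2.eq_iff] at hn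
    rcases hn with ⟨h1, -⟩ | ⟨-, h2⟩
    · exact ⟨n, h1⟩
    · exact ⟨n + 1, h2⟩

end AuxProof
section AuxProof2

variable {G : SimpleGraph V}

lemma sameComp_symm {F : Set (Sym2 V)} {r s : Ray G} (h : SameComp G F r s) :
    SameComp G F s r := by
  obtain ⟨N, hN⟩ := h
  exact ⟨N, fun m n hm hn => (hN n m hn hm).symm⟩

lemma sameComp_trans {F : Set (Sym2 V)} {r s t : Ray G}
    (h1 : SameComp G F r s) (h2 : SameComp G F s t) : SameComp G F r t := by
  obtain ⟨N1, h1⟩ := h1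
  obtain ⟨N2, h2⟩ := h2
  refine ⟨max N1 N2, fun m n hm hn => ?_⟩
  exact (h1 m (max N1 N2) (le_trans (le_max_left _ _) hm) (le_max_left _ _)).trans
    (h2 (max N1 N2) n (le_max_right _ _) (le_trans (le_max_right _ _) hn))

lemma sameComp_refl (r : Ray G) {F : Set (Sym2 V)} (hF : F.Finite) : SameComp G F r r := by
  obtain ⟨N, hN⟩ := ray_tail_avoid r hF
  exact ⟨N, fun m n hm hn => ray_reach r hN m n hm hn⟩

lemma edgeEquiv_equivalence : Equivalence (EdgeEquiv G) where
  refl r := fun F hF => sameComp_refl r hF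
  symm h := fun F hF => sameComp_symm (h F hF)
  trans h1 h2 := fun F hF => sameComp_trans (h1 F hF) (h2 F hF)

lemma edgeEquiv_of_eq {r s : Ray G} (h : r.edgeEnd = s.edgeEnd) : EdgeEquiv G r s :=
  ((edgeEquiv_equivalence (G := G)).eqvGen_iff).mp (Quot.eq.mp h)

lemma reach_mono {F F' : Set (Sym2 V)} (h : F ⊆ F') {x y : V}
    (hr : (G.deleteEdges F').Reachable x y) : (G.deleteEdges F).Reachable x y := by
  refine hr.mono ?_
  intro a b hab
  rw [SimpleGraph.deleteEdges_adj] at hab ⊢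
  exact ⟨hab.1, fun hx => hab.2 (h hx)⟩

lemma omegaE_mono {F F' : Set (Sym2 V)} (h : F ⊆ F') (ω : EdgeEnd G) :
    OmegaE G F' ω ⊆ OmegaE G F ω := by
  rintro η ⟨r, s, hr, hs, N, hN⟩
  exact ⟨r, s, hr, hs, N, fun m n hm hn => reach_mono h (hN m n hm hn)⟩

lemma omegaE_subset_of_mem {F : Set (Sym2 V)} (hF : F.Finite) {ω ω₀ : EdgeEnd G}
    (h : ω ∈ OmegaE G F ω₀) : OmegaE G F ω ⊆ OmegaE G F ω₀ := by
  obtain ⟨r0, s0, hr0, hs0, h0⟩ := h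
  rintro η ⟨r1, s1, hr1, hs1, h1⟩
  have e01 : SameComp G F s0 r1 := edgeEquiv_of_eq (hs0.trans hr1.symm) F hF
  exact ⟨r0, s1, hr0, hs1, sameComp_trans (sameComp_trans h0 e01) h1⟩

lemma exists_basic_subset {U : Set (EdgeEnd G)}
    (hU : TopologicalSpace.GenerateOpen {U | ∃ (F : Set (Sym2 V)) (ω : EdgeEnd G),
      F.Finite ∧ F ⊆ G.edgeSet ∧ U = OmegaE G F ω} U)
    (ω : EdgeEnd G) :
    ω ∈ U → ∃ F : Set (Sym2 V), F.Finite ∧ OmegaE G F ω ⊆ U := by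
  induction hU with
  | basic U hU =>
    intro hω
    obtain ⟨F, ω₀, hF, -, rfl⟩ := hU
    exact ⟨F, hF, omegaE_subset_of_mem hF hω⟩
  | univ => exact fun _ => ⟨∅, Set.finite_empty, Set.subset_univ _⟩
  | inter U V hU hV ihU ihV =>
    intro hω
    obtain ⟨F1, h1, hs1⟩ := ihU hω.1
    obtain ⟨F2, h2, hs2⟩ := ihV hω.2
    refine ⟨F1 ∪ F2, h1.union h2, Set.subset_inter ?_ ?_⟩
    · exact (omegaE_mono Set.subset_union_left ω).trans hs1
    · exact (omegaE_mono Set.subset_union_right ω).trans hs2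
  | sUnion S hS ih =>
    rintro ⟨t, htS, hωt⟩
    obtain ⟨F, hF, hsub⟩ := ih t htS hωt
    exact ⟨F, hF, hsub.trans (Set.subset_sUnion_of_mem htS)⟩

lemma exists_sep {X : Set (EdgeEnd G)} {ω : EdgeEnd G}
    (h : ω ∉ @closure _ (edgeEndTopology G) X) :
    ∃ F : Set (Sym2 V), F.Finite ∧ OmegaE G F ω ∩ X = ∅ := by
  letI := edgeEndTopology G
  rw [mem_closure_iff] at h
  push_neg at h
  obtain ⟨U, hUopen, hωU, hUX⟩ := h
  obtain ⟨F, hF, hsub⟩ := exists_basic_subset (G := G) hUopen ω hωU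
  refine ⟨F, hF, ?_⟩
  exact Set.eq_empty_of_subset_empty ((Set.inter_subset_inter_left X hsub).trans hUX.subset)

end AuxProof2
section AuxProof3

variable {G : SimpleGraph V}

/-- `Q` attaches to the edge-end `ω`: either it contains a ray with edge-end `ω`, or a
vertex edge-dominating `ω`. -/
def Side (Q : GenPath G) (ω : EdgeEnd G) : Prop :=
  (∃ s : Ray G, s.edgeEnd = ω ∧ ∀ n : ℕ, s(s.f n, s.f (n + 1)) ∈ Q.edges) ∨
  (∃ u : V, u ∈ Q.vertices ∧ EdgeDominates G u ω)

lemma dr_pos_edge (d : DoubleRay G) (n : ℕ) :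
    s(d.posRay.f n, d.posRay.f (n + 1)) ∈ (GenPath.doubleRay d).edges := by
  refine ⟨(n : ℤ), ?_⟩
  show s(d.f (n : ℤ), d.f ((n : ℤ) + 1)) = s(d.f (n : ℤ), d.f ((n + 1 : ℕ) : ℤ))
  rw [show ((n : ℤ) + 1) = ((n + 1 : ℕ) : ℤ) by push_cast; ring]

lemma dr_neg_edge (d : DoubleRay G) (n : ℕ) :
    s(d.negRay.f n, d.negRay.f (n + 1)) ∈ (GenPath.doubleRay d).edges := by
  refine ⟨-(n : ℤ) - 1, ?_⟩
  show s(d.f (-(n : ℤ) - 1), d.f (-(n : ℤ) - 1 + 1)) = s(d.f (-(n : ℤ)), d.f (-((n + 1 : ℕ) : ℤ)))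
  rw [show (-(n : ℤ) - 1 + 1) = -(n : ℤ) by ring,
    show (-((n + 1 : ℕ) : ℤ)) = -(n : ℤ) - 1 by push_cast; ring, Sym2.eq_swap]

lemma side_of_vertexEnd {v : V} {ω : EdgeEnd G} {Q : GenPath G}
    (h : IsVertexEndPath G v ω Q) : Side Q ω ∧ v ∈ Q.vertices := by
  rcases h with ⟨s, rfl, h0, hend⟩ | ⟨u, hu, p, hp, rfl⟩
  · exact ⟨Or.inl ⟨s, hend, fun n => ⟨n, rfl⟩⟩, ⟨0, h0⟩⟩
  · exact ⟨Or.inr ⟨u, p.end_mem_support, hu⟩, p.start_mem_support⟩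

lemma sides_of_endEnd {ω₁ ω₂ : EdgeEnd G} {Q : GenPath G}
    (h : IsEndEndPath G ω₁ ω₂ Q) : Side Q ω₁ ∧ Side Q ω₂ := by
  rcases h with ⟨d, rfl, hd⟩ | ⟨v, hdom, hvp⟩ | ⟨v, hdom, hvp⟩
  · have hpos : Side (GenPath.doubleRay d) d.posRay.edgeEnd :=
      Or.inl ⟨d.posRay, rfl, fun n => dr_pos_edge d n⟩
    have hneg : Side (GenPath.doubleRay d) d.negRay.edgeEnd :=
      Or.inl ⟨d.negRay, rfl, fun n => dr_neg_edge d n⟩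
    rcases hd with ⟨h1, h2⟩ | ⟨h1, h2⟩
    · exact ⟨h1 ▸ hpos, h2 ▸ hneg⟩
    · exact ⟨h2 ▸ hneg, h1 ▸ hpos⟩
  · obtain ⟨hside, hv⟩ := side_of_vertexEnd hvp
    exact ⟨hside, Or.inr ⟨v, hv, hdom⟩⟩
  · obtain ⟨hside, hv⟩ := side_of_vertexEnd hvp
    exact ⟨Or.inr ⟨v, hv, hdom⟩, hside⟩

/-- Key crossing lemma: if an `A–B` path `Q` avoids the finite edge set `F`, shares an
edge with the tail (beyond `N`) of a ray `r` whose tail avoids `F`, then any end `η` to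
which `Q` attaches lies in the same `F`-region as `r`. -/
lemma side_mem_omegaE {F : Set (Sym2 V)} (hF : F.Finite) {r : Ray G} {N : ℕ}
    (hN : ∀ k, N ≤ k → s(r.f k, r.f (k + 1)) ∉ F)
    {Q : GenPath G} (hQF : ∀ e ∈ Q.edges, e ∉ F)
    {n : ℕ} (hn : N ≤ n) (he : s(r.f n, r.f (n + 1)) ∈ Q.edges)
    {η : EdgeEnd G} (hside : Side Q η) :
    η ∈ OmegaE G F r.edgeEnd := by
  have hrn : r.f n ∈ Q.vertices := mem_vertices_of_edge he
  rcases hside with ⟨s, hs, hedges⟩ | ⟨u, huQ, hdom⟩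
  · refine ⟨r, s, rfl, hs, N, fun m k hm _ => ?_⟩
    have h1 : (G.deleteEdges F).Reachable (r.f m) (r.f n) := ray_reach r hN m n hm hn
    have hs0 : s.f 0 ∈ Q.vertices := mem_vertices_of_edge (hedges 0)
    have h2 : (G.deleteEdges F).Reachable (r.f n) (s.f 0) := genpath_conn Q hQF _ hrn _ hs0
    have h3 : (G.deleteEdges F).Reachable (s.f 0) (s.f k) :=
      ray_reach s (N := 0) (fun j _ => hQF _ (hedges j)) 0 k (Nat.zero_le _) (Nat.zero_le _)
    exact (h1.trans h2).trans h3
  · obtain ⟨t, htend, N', hN'⟩ := hdom F hF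
    refine ⟨r, t, rfl, htend, max N N', fun m k hm hk => ?_⟩
    have h1 : (G.deleteEdges F).Reachable (r.f m) (r.f n) :=
      ray_reach r hN m n (le_trans (le_max_left _ _) hm) hn
    have h2 : (G.deleteEdges F).Reachable (r.f n) u := genpath_conn Q hQF _ hrn _ huQ
    have h3 : (G.deleteEdges F).Reachable u (t.f k) :=
      (hN' k (le_trans (le_max_right _ _) hk)).symm
    exact (h1.trans h2).trans h3

lemma ray_cover (A B : Set (EdgeEnd G)) {r : Ray G} {F : Set (Sym2 V)} (hF : F.Finite)
    {X : Set (EdgeEnd G)} (hsep : OmegaE G F r.edgeEnd ∩ X = ∅)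
    (hX : ∀ Q : GenPath G, IsABPathEE G A B Q → ∃ η ∈ X, Side Q η) :
    ∃ Fs : Set (Sym2 V), Fs.Finite ∧ ∀ Q : GenPath G, IsABPathEE G A B Q →
      ∀ n : ℕ, s(r.f n, r.f (n + 1)) ∈ Q.edges → (Q.edges ∩ Fs).Nonempty := by
  obtain ⟨N, hN⟩ := ray_tail_avoid r hF
  refine ⟨F ∪ (fun k => s(r.f k, r.f (k + 1))) '' Set.Iio N,
    hF.union ((Set.finite_Iio N).image _), ?_⟩
  intro Q hQ n he
  by_cases hn : n < N
  · exact ⟨_, he, Or.inr ⟨n, hn, rfl⟩⟩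
  · by_contra hempty
    rw [Set.not_nonempty_iff_eq_empty] at hempty
    have hQF : ∀ e ∈ Q.edges, e ∉ F := fun e heQ heF =>
      Set.eq_empty_iff_forall_notMem.mp hempty e ⟨heQ, Or.inl heF⟩
    obtain ⟨η, hηX, hside⟩ := hX Q hQ
    have hmem := side_mem_omegaE hF hN hQF (Nat.le_of_not_lt hn) he hside
    exact Set.eq_empty_iff_forall_notMem.mp hsep η ⟨hmem, hηX⟩

end AuxProof3
section AuxProof4

variable {G : SimpleGraph V}

lemma side_in_B (A B : Set (EdgeEnd G)) :
    ∀ Q : GenPath G, IsABPathEE G A B Q → ∃ η ∈ B, Side Q η := by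
  rintro Q ⟨ω₁, h1, ω₂, h2, hee⟩
  exact ⟨ω₂, h2, (sides_of_endEnd hee).2⟩

lemma side_in_A (A B : Set (EdgeEnd G)) :
    ∀ Q : GenPath G, IsABPathEE G A B Q → ∃ η ∈ A, Side Q η := by
  rintro Q ⟨ω₁, h1, ω₂, h2, hee⟩
  exact ⟨ω₁, h1, (sides_of_endEnd hee).1⟩

/-- For a ray whose end lies in `A` or in `B`, a finite edge set meeting every `A–B` path
that shares an edge with the ray. -/
lemma raycase (A B : Set (EdgeEnd G))
    (hAB : @closure _ (edgeEndTopology G) A ∩ B = ∅)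
    (hBA : A ∩ @closure _ (edgeEndTopology G) B = ∅)
    (r : Ray G) (h : r.edgeEnd ∈ A ∨ r.edgeEnd ∈ B) :
    ∃ Fs : Set (Sym2 V), Fs.Finite ∧ ∀ Q : GenPath G, IsABPathEE G A B Q →
      ∀ n : ℕ, s(r.f n, r.f (n + 1)) ∈ Q.edges → (Q.edges ∩ Fs).Nonempty := by
  rcases h with hA | hB
  · have hncl : r.edgeEnd ∉ @closure _ (edgeEndTopology G) B := fun hc =>
      Set.eq_empty_iff_forall_notMem.mp hBA _ ⟨hA, hc⟩
    obtain ⟨F, hF, hsep⟩ := exists_sep hncl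
    exact ray_cover A B hF hsep (side_in_B A B)
  · have hncl : r.edgeEnd ∉ @closure _ (edgeEndTopology G) A := fun hc =>
      Set.eq_empty_iff_forall_notMem.mp hAB _ ⟨hc, hB⟩
    obtain ⟨F, hF, hsep⟩ := exists_sep hncl
    exact ray_cover A B hF hsep (side_in_A A B)

/-- Main cover lemma: for every `A–B` path `P` there is a finite edge set `Fs` such that
every `A–B` path sharing an edge with `P` meets `Fs`. -/
lemma cover (A B : Set (EdgeEnd G))
    (hAB : @closure _ (edgeEndTopology G) A ∩ B = ∅)
    (hBA : A ∩ @closure _ (edgeEndTopology G) B = ∅)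
    {P : GenPath G} (hP : IsABPathEE G A B P) :
    ∃ Fs : Set (Sym2 V), Fs.Finite ∧ ∀ Q : GenPath G, IsABPathEE G A B Q →
      (Q.edges ∩ P.edges).Nonempty → (Q.edges ∩ Fs).Nonempty := by
  obtain ⟨ω₁, hω₁, ω₂, hω₂, hee⟩ := hP
  have vertexEndCase : ∀ (v : V) (ω : EdgeEnd G), (ω ∈ A ∨ ω ∈ B) →
      IsVertexEndPath G v ω P →
      ∃ Fs : Set (Sym2 V), Fs.Finite ∧ ∀ Q : GenPath G, IsABPathEE G A B Q →
        (Q.edges ∩ P.edges).Nonempty → (Q.edges ∩ Fs).Nonempty := by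
    rintro v ω hω (⟨s, rfl, h0, hend⟩ | ⟨u, hu, p, hp, rfl⟩)
    · obtain ⟨Fs, hFs, hc⟩ := raycase A B hAB hBA s (hend ▸ hω)
      refine ⟨Fs, hFs, ?_⟩
      rintro Q hQ ⟨e, heQ, n, hn⟩
      have hn' : s(s.f n, s.f (n + 1)) = e := hn
      exact hc Q hQ n (hn' ▸ heQ)
    · exact ⟨{e | e ∈ p.edges}, p.edges.finite_toSet, fun Q hQ hne => hne⟩
  rcases hee with ⟨d, rfl, hd⟩ | ⟨v, hdom, hvp⟩ | ⟨v, hdom, hvp⟩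
  · have hpos : d.posRay.edgeEnd ∈ A ∨ d.posRay.edgeEnd ∈ B := by
      rcases hd with ⟨h1, -⟩ | ⟨h1, -⟩
      · exact Or.inl (h1 ▸ hω₁)
      · exact Or.inr (h1 ▸ hω₂)
    have hneg : d.negRay.edgeEnd ∈ A ∨ d.negRay.edgeEnd ∈ B := by
      rcases hd with ⟨-, h2⟩ | ⟨-, h2⟩
      · exact Or.inr (h2 ▸ hω₂)
      · exact Or.inl (h2 ▸ hω₁)
    obtain ⟨F1, hF1, hc1⟩ := raycase A B hAB hBA d.posRay hpos
    obtain ⟨F2, hF2, hc2⟩ := raycase A B hAB hBA d.negRay hneg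
    refine ⟨F1 ∪ F2, hF1.union hF2, ?_⟩
    rintro Q hQ ⟨e, heQ, k, hk⟩
    have hk' : s(d.f k, d.f (k + 1)) = e := hk
    rcases le_or_gt 0 k with h0 | h0
    · have hpose : s(d.posRay.f k.toNat, d.posRay.f (k.toNat + 1)) ∈ Q.edges := by
        have : s(d.f ((k.toNat : ℕ) : ℤ), d.f (((k.toNat : ℕ) : ℤ) + 1)) = e := by
          rw [show ((k.toNat : ℕ) : ℤ) = k by omega]; exact hk'
        have h2 : s(d.posRay.f k.toNat, d.posRay.f (k.toNat + 1))
            = s(d.f ((k.toNat : ℕ) : ℤ), d.f (((k.toNat : ℕ) : ℤ) + 1)) := by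
          show s(d.f ((k.toNat : ℕ) : ℤ), d.f (((k.toNat + 1 : ℕ)) : ℤ)) = _
          rw [show (((k.toNat + 1 : ℕ)) : ℤ) = ((k.toNat : ℕ) : ℤ) + 1 by push_cast; ring]
        rw [h2, this]; exact heQ
      obtain ⟨e', he'⟩ := hc1 Q hQ k.toNat hpose
      exact ⟨e', he'.1, Or.inl he'.2⟩
    · set m : ℕ := (-k - 1).toNat with hm
      have hnege : s(d.negRay.f m, d.negRay.f (m + 1)) ∈ Q.edges := by
        have h2 : s(d.negRay.f m, d.negRay.f (m + 1)) = s(d.f k, d.f (k + 1)) := by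
          show s(d.f (-(m : ℤ)), d.f (-((m + 1 : ℕ) : ℤ))) = s(d.f k, d.f (k + 1))
          rw [show (-(m : ℤ)) = k + 1 by omega, show (-((m + 1 : ℕ) : ℤ)) = k by push_cast; omega,
            Sym2.eq_swap]
        rw [h2, hk']; exact heQ
      obtain ⟨e', he'⟩ := hc2 Q hQ m hnege
      exact ⟨e', he'.1, Or.inr he'.2⟩
  · exact vertexEndCase v ω₁ (Or.inl hω₁) hvp
  · exact vertexEndCase v ω₂ (Or.inr hω₂) hvp

/-- Every `GenPath` has countably many edges. -/
lemma edges_countable (Q : GenPath G) : Q.edges.Countable := by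
  cases Q with
  | finite u v p hp => exact p.edges.finite_toSet.countable
  | ray r => exact Set.countable_range _
  | doubleRay d => exact Set.countable_range _

end AuxProof4
/-- If the supremum `κ` of the cardinalities of families of pairwise edge-disjoint `A–B`
paths is infinite, then every `⊆`-maximal such family has cardinality `κ`; in particular
the supremum is attained. -/
theorem maximal_family_attains_sup (A B : Set (EdgeEnd G))
    (hAB : @closure _ (edgeEndTopology G) A ∩ B = ∅)
    (hBA : A ∩ @closure _ (edgeEndTopology G) B = ∅)
    (κ : Cardinal.{u})
    (hκ : κ = ⨆ Ps : {Ps : Set (GenPath G) //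
        (∀ P ∈ Ps, IsABPathEE G A B P) ∧ PairwiseEdgeDisjoint G Ps},
      Cardinal.mk ↥Ps.1)
    (hinf : Cardinal.aleph0 ≤ κ) :
    (∀ Ps : Set (GenPath G), (∀ P ∈ Ps, IsABPathEE G A B P) → PairwiseEdgeDisjoint G Ps →
      (∀ Qs : Set (GenPath G), Ps ⊆ Qs → (∀ P ∈ Qs, IsABPathEE G A B P) →
        PairwiseEdgeDisjoint G Qs → Qs = Ps) →
      Cardinal.mk ↥Ps = κ) ∧
    ∃ Ps : Set (GenPath G), (∀ P ∈ Ps, IsABPathEE G A B P) ∧ PairwiseEdgeDisjoint G Ps ∧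
      Cardinal.mk ↥Ps = κ := by
  classical
  haveI : Nonempty {Ps : Set (GenPath G) //
      (∀ P ∈ Ps, IsABPathEE G A B P) ∧ PairwiseEdgeDisjoint G Ps} :=
    ⟨⟨∅, fun P hP => absurd hP (Set.notMem_empty P), Set.pairwise_empty _⟩⟩
  have hsymm : Symmetric fun P Q : GenPath G => P.edges ∩ Q.edges = ∅ := by
    intro a b hab
    rw [Set.inter_comm]
    exact hab
  have main : ∀ Ps : Set (GenPath G), (∀ P ∈ Ps, IsABPathEE G A B P) →
      PairwiseEdgeDisjoint G Ps →
      (∀ Qs : Set (GenPath G), Ps ⊆ Qs → (∀ P ∈ Qs, IsABPathEE G A B P) →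
        PairwiseEdgeDisjoint G Qs → Qs = Ps) →
      Cardinal.mk ↥Ps = κ := by
    intro Ps h1 h2 hmax
    -- every A–B path not in Ps shares an edge with a member of Ps
    have hshare : ∀ Q : GenPath G, IsABPathEE G A B Q → Q ∉ Ps →
        ∃ P ∈ Ps, (Q.edges ∩ P.edges).Nonempty := by
      intro Q hQ hQPs
      by_contra hnone
      push_neg at hnone
      have hpair : PairwiseEdgeDisjoint G (insert Q Ps) := by
        haveI : Std.Symm fun P Q : GenPath G => P.edges ∩ Q.edges = ∅ := ⟨fun a b h => hsymm h⟩
        rw [PairwiseEdgeDisjoint, Set.pairwise_insert_of_symmetric]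
        exact ⟨h2, fun P hP _ => hnone P hP⟩
      have heq := hmax (insert Q Ps) (Set.subset_insert _ _)
        (fun P hP => (Set.mem_insert_iff.mp hP).elim (fun h => h ▸ hQ) (h1 P)) hpair
      exact hQPs (heq ▸ Set.mem_insert Q Ps)
    have hle : Cardinal.mk ↥Ps ≤ κ := by
      rw [hκ]
      exact le_ciSup (Cardinal.bddAbove_range _)
        (⟨Ps, h1, h2⟩ : {Ps : Set (GenPath G) //
          (∀ P ∈ Ps, IsABPathEE G A B P) ∧ PairwiseEdgeDisjoint G Ps})
    rcases Set.finite_or_infinite Ps with hfin | hinf2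
    · -- finite maximal family: contradiction with `hinf`
      exfalso
      have hcov : ∀ P ∈ Ps, ∃ Fs : Set (Sym2 V), Fs.Finite ∧ ∀ Q : GenPath G,
          IsABPathEE G A B Q → (Q.edges ∩ P.edges).Nonempty → (Q.edges ∩ Fs).Nonempty :=
        fun P hP => cover A B hAB hBA (h1 P hP)
      choose! Fc hFcfin hFc using hcov
      have hFstarfin : (⋃ P ∈ Ps, Fc P).Finite := hfin.biUnion fun P hP => hFcfin P hP
      have hbound : ∀ Qs : Set (GenPath G), (∀ P ∈ Qs, IsABPathEE G A B P) →
          PairwiseEdgeDisjoint G Qs →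
          Cardinal.mk ↥Qs ≤ Cardinal.mk ↥Ps + Cardinal.mk ↥(⋃ P ∈ Ps, Fc P) := by
        intro Qs hq1 hq2
        have hchoice : ∀ Q : ↥Qs, (Q : GenPath G) ∉ Ps →
            ∃ e, e ∈ (Q : GenPath G).edges ∧ e ∈ ⋃ P ∈ Ps, Fc P := by
          rintro ⟨Q, hQ⟩ hQP
          obtain ⟨P, hP, hne⟩ := hshare Q (hq1 Q hQ) hQP
          obtain ⟨e, he1, he2⟩ := hFc P hP Q (hq1 Q hQ) hne
          exact ⟨e, he1, Set.mem_biUnion hP he2⟩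
        choose! g hg1 hg2 using hchoice
        have hinj : Function.Injective fun Q : ↥Qs =>
            if h : (Q : GenPath G) ∈ Ps then (Sum.inl ⟨Q, h⟩ : ↥Ps ⊕ ↥(⋃ P ∈ Ps, Fc P))
            else Sum.inr ⟨g Q h, hg2 Q h⟩ := by
          rintro ⟨Q1, hQ1⟩ ⟨Q2, hQ2⟩ h
          by_cases h1' : Q1 ∈ Ps <;> by_cases h2' : Q2 ∈ Ps <;>
            simp only [h1', h2', dif_pos, dif_neg, not_false_iff] at h
          · simpa using congrArg Subtype.val (Sum.inl.inj h)
          · cases h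
          · cases h
          · have hval : g ⟨Q1, hQ1⟩ h1' = g ⟨Q2, hQ2⟩ h2' :=
              congrArg Subtype.val (Sum.inr.inj h)
            by_contra hne
            have hQne : Q1 ≠ Q2 := fun hh => hne (by simpa [hh])
            have hdisj := hq2 hQ1 hQ2 hQne
            have hmem : g ⟨Q1, hQ1⟩ h1' ∈ Q1.edges ∩ Q2.edges :=
              ⟨hg1 ⟨Q1, hQ1⟩ h1', by rw [hval]; exact hg1 ⟨Q2, hQ2⟩ h2'⟩
            rw [hdisj] at hmem
            exact hmem
        calc Cardinal.mk ↥Qs ≤ Cardinal.mk (↥Ps ⊕ ↥(⋃ P ∈ Ps, Fc P)) :=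
              Cardinal.mk_le_of_injective hinj
          _ = Cardinal.mk ↥Ps + Cardinal.mk ↥(⋃ P ∈ Ps, Fc P) := by
              rw [Cardinal.mk_sum, Cardinal.lift_id, Cardinal.lift_id]
      have hκle : κ ≤ Cardinal.mk ↥Ps + Cardinal.mk ↥(⋃ P ∈ Ps, Fc P) := by
        rw [hκ]
        exact ciSup_le' fun Qs => hbound Qs.1 Qs.2.1 Qs.2.2
      have hlt : Cardinal.mk ↥Ps + Cardinal.mk ↥(⋃ P ∈ Ps, Fc P) < Cardinal.aleph0 :=
        Cardinal.add_lt_aleph0 hfin.lt_aleph0 hFstarfin.lt_aleph0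
      exact absurd (hinf.trans hκle) (not_le.mpr hlt)
    · -- infinite maximal family
      haveI := hinf2.to_subtype
      have hPsinf : Cardinal.aleph0 ≤ Cardinal.mk ↥Ps := Cardinal.aleph0_le_mk _
      have hEP : Cardinal.mk ↥(⋃ P ∈ Ps, GenPath.edges P) ≤ Cardinal.mk ↥Ps := by
        calc Cardinal.mk ↥(⋃ P ∈ Ps, GenPath.edges P)
            ≤ Cardinal.mk ↥Ps * ⨆ P : ↥Ps, Cardinal.mk ↥(GenPath.edges (P : GenPath G)) :=
              Cardinal.mk_biUnion_le _ _
          _ ≤ Cardinal.mk ↥Ps * Cardinal.aleph0 := by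
              refine mul_le_mul_right (ciSup_le' fun P => ?_) _
              haveI := (edges_countable (P : GenPath G)).to_subtype
              exact Cardinal.mk_le_aleph0
          _ = Cardinal.mk ↥Ps := Cardinal.mul_aleph0_eq hPsinf
      have hbound : ∀ Qs : Set (GenPath G), (∀ P ∈ Qs, IsABPathEE G A B P) →
          PairwiseEdgeDisjoint G Qs → Cardinal.mk ↥Qs ≤ Cardinal.mk ↥Ps := by
        intro Qs hq1 hq2
        have hchoice : ∀ Q : ↥Qs, (Q : GenPath G) ∉ Ps →
            ∃ e, e ∈ (Q : GenPath G).edges ∧ e ∈ ⋃ P ∈ Ps, GenPath.edges P := by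
          rintro ⟨Q, hQ⟩ hQP
          obtain ⟨P, hP, e, he1, he2⟩ := hshare Q (hq1 Q hQ) hQP
          exact ⟨e, he1, Set.mem_biUnion hP he2⟩
        choose! g hg1 hg2 using hchoice
        have hinj : Function.Injective fun Q : ↥Qs =>
            if h : (Q : GenPath G) ∈ Ps then
              (Sum.inl ⟨Q, h⟩ : ↥Ps ⊕ ↥(⋃ P ∈ Ps, GenPath.edges P))
            else Sum.inr ⟨g Q h, hg2 Q h⟩ := by
          rintro ⟨Q1, hQ1⟩ ⟨Q2, hQ2⟩ h
          by_cases h1' : Q1 ∈ Ps <;> by_cases h2' : Q2 ∈ Ps <;>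
            simp only [h1', h2', dif_pos, dif_neg, not_false_iff] at h
          · simpa using congrArg Subtype.val (Sum.inl.inj h)
          · cases h
          · cases h
          · have hval : g ⟨Q1, hQ1⟩ h1' = g ⟨Q2, hQ2⟩ h2' :=
              congrArg Subtype.val (Sum.inr.inj h)
            by_contra hne
            have hQne : Q1 ≠ Q2 := fun hh => hne (by simpa [hh])
            have hdisj := hq2 hQ1 hQ2 hQne
            have hmem : g ⟨Q1, hQ1⟩ h1' ∈ Q1.edges ∩ Q2.edges :=
              ⟨hg1 ⟨Q1, hQ1⟩ h1', by rw [hval]; exact hg1 ⟨Q2, hQ2⟩ h2'⟩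
            rw [hdisj] at hmem
            exact hmem
        calc Cardinal.mk ↥Qs
            ≤ Cardinal.mk (↥Ps ⊕ ↥(⋃ P ∈ Ps, GenPath.edges P)) :=
              Cardinal.mk_le_of_injective hinj
          _ = Cardinal.mk ↥Ps + Cardinal.mk ↥(⋃ P ∈ Ps, GenPath.edges P) := by
              rw [Cardinal.mk_sum, Cardinal.lift_id, Cardinal.lift_id]
          _ ≤ Cardinal.mk ↥Ps + Cardinal.mk ↥Ps := add_le_add_right hEP _
          _ = Cardinal.mk ↥Ps := Cardinal.add_eq_self hPsinf
      refine le_antisymm hle ?_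
      rw [hκ]
      exact ciSup_le' fun Qs => hbound Qs.1 Qs.2.1 Qs.2.2
  refine ⟨main, ?_⟩
  -- Zorn's lemma: a maximal family exists
  have hzorn := zorn_subset_nonempty
    {Ps : Set (GenPath G) | (∀ P ∈ Ps, IsABPathEE G A B P) ∧ PairwiseEdgeDisjoint G Ps}
    ?_ ∅ ⟨fun P hP => absurd hP (Set.notMem_empty P), Set.pairwise_empty _⟩
  · obtain ⟨M, -, hM⟩ := hzorn
    refine ⟨M, hM.1.1, hM.1.2, main M hM.1.1 hM.1.2 ?_⟩
    intro Qs hsub hq1 hq2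
    exact Set.Subset.antisymm (hM.2 ⟨hq1, hq2⟩ hsub) hsub
  · intro c hcS hchain hcne
    refine ⟨⋃₀ c, ⟨?_, ?_⟩, fun s hs => Set.subset_sUnion_of_mem hs⟩
    · rintro P ⟨t, htc, hPt⟩
      exact (hcS htc).1 P hPt
    · rintro P ⟨t1, ht1, hP1⟩ Q ⟨t2, ht2, hQ2⟩ hne
      rcases eq_or_ne t1 t2 with rfl | htne
      · exact (hcS ht1).2 hP1 hQ2 hne
      · rcases hchain ht1 ht2 htne with hsub | hsub
        · exact (hcS ht2).2 (hsub hP1) hQ2 hne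
        · exact (hcS ht1).2 hP1 (hsub hQ2) hne

end EdgeEndPaper
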